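/- Let k ≥ 2 be an even integer, M ≥ 2 an integer, and 1 ≤ t ≤ M−1. Then (1/2)·Σ_{r=1}^{M} B̃_k(r/M)·cos(2πtr/M) = ((−1)^{k/2+1}·k! / (2·(2π)^k)) · M^{1−k} · ( ζ(k, t/M) + ζ(k, 1 − t/M) ). -/

import Mathlib

open scoped Classical in
/-- The periodic Bernoulli function `B̃_k(x) = B_k({x})`, with the convention
`B̃_1(x) = 0` for integer `x`. -/
noncomputable def periodicBernoulli (k : ℕ) (x : ℝ) : ℝ :=
  if k = 1 ∧ Int.fract x = 0 then 0
  else Polynomial.aeval (Int.fract x) (Polynomial.bernoulli k)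

/-- The Hurwitz zeta value `ζ(k,a) = Σ_{n ≥ 0} (n+a)^{−k}` (for `k ≥ 2`, `0 < a ≤ 1`). -/
noncomputable def hurwitzZetaValue (k : ℕ) (a : ℝ) : ℝ :=
  ∑' n : ℕ, 1 / ((n : ℝ) + a) ^ k

open Real Finset in
private lemma sum_cos_char {M : ℕ} (hM : 0 < M) (j : ℤ) :
    ∑ r ∈ Finset.Icc 1 M, Real.cos (2 * Real.pi * j * r / M) =
      if (M : ℤ) ∣ j then (M : ℝ) else 0 := by
  have hM0 : (M : ℝ) ≠ 0 := Nat.cast_ne_zero.mpr hM.ne'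
  by_cases hdvd : (M : ℤ) ∣ j
  · obtain ⟨c, rfl⟩ := hdvd
    rw [if_pos ⟨c, rfl⟩]
    have h1 : ∀ r ∈ Finset.Icc 1 M, Real.cos (2 * π * (((M : ℤ) * c : ℤ) : ℝ) * r / M) = 1 := by
      intro r _
      have h2 : 2 * π * (((M : ℤ) * c : ℤ) : ℝ) * r / M = ((c * r : ℤ) : ℝ) * (2 * π) := by
        push_cast
        field_simp
      rw [h2, Real.cos_int_mul_two_pi]
    rw [Finset.sum_congr rfl h1, Finset.sum_const, Nat.card_Icc]
    simp
  · rw [if_neg hdvd]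
    set z : ℂ := Complex.exp ((2 * π * j / M : ℝ) * Complex.I) with hz
    have hMC : (M : ℂ) ≠ 0 := Nat.cast_ne_zero.mpr hM.ne'
    have hzM : z ^ M = 1 := by
      rw [← Complex.exp_nat_mul]
      have h3 : (M : ℂ) * (((2 * π * j / M : ℝ) : ℂ) * Complex.I) = (j : ℂ) * (2 * π * Complex.I) := by
        push_cast
        field_simp
      rw [h3, Complex.exp_int_mul_two_pi_mul_I]
    have hz1 : z ≠ 1 := by
      intro h
      rw [hz, Complex.exp_eq_one_iff] at h
      obtain ⟨n, hn⟩ := h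
      apply hdvd
      have h4 : ((2 * π * j / M : ℝ) : ℂ) * Complex.I = ((n * (2 * π) : ℝ) : ℂ) * Complex.I := by
        rw [hn]; push_cast; ring
      have h5 : (2 * π * j / M : ℝ) = (n * (2 * π) : ℝ) :=
        Complex.ofReal_inj.mp (mul_right_cancel₀ Complex.I_ne_zero h4)
      field_simp at h5
      have h6 : (2 * π) * (j : ℝ) = (2 * π) * ((n * M : ℤ) : ℝ) := by
        push_cast
        rw [h5]; ring
      have h7 : (j : ℝ) = ((n * M : ℤ) : ℝ) :=
        mul_left_cancel₀ (by positivity : (2 * π : ℝ) ≠ 0) h6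
      have h8 : j = n * M := Int.cast_injective h7
      exact h8 ▸ dvd_mul_left (M : ℤ) n
    have hre : ∀ r ∈ Finset.Icc 1 M, Real.cos (2 * π * j * r / M) = (z ^ r).re := by
      intro r _
      have h7 : z ^ r = Complex.exp (((2 * π * j * r / M : ℝ) : ℂ) * Complex.I) := by
        rw [hz, ← Complex.exp_nat_mul]
        congr 1
        push_cast
        ring
      rw [h7, Complex.exp_ofReal_mul_I_re]
    rw [Finset.sum_congr rfl hre, ← Complex.re_sum]
    have hins : Finset.range (M + 1) = insert 0 (Finset.Icc 1 M) := by
      ext x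
      simp only [Finset.mem_range, Finset.mem_insert, Finset.mem_Icc]
      omega
    have hgeom : ∑ i ∈ Finset.range (M + 1), z ^ i = 1 := by
      rw [geom_sum_eq hz1, pow_succ, hzM, one_mul]
      exact div_self (sub_ne_zero.mpr hz1)
    rw [hins, Finset.sum_insert (by simp)] at hgeom
    simp only [pow_zero] at hgeom
    have : ∑ r ∈ Finset.Icc 1 M, z ^ r = 0 := by linear_combination hgeom
    rw [this, Complex.zero_re]

private lemma tsum_indicator_eq {k M t : ℕ} (hk : 2 ≤ k) (hM : 0 < M) (ht1 : 1 ≤ t) (ht2 : t < M) :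
    hurwitzZetaValue k ((t : ℝ) / M) =
      (M : ℝ) ^ k * ∑' n : ℕ, (if (M : ℤ) ∣ (n : ℤ) - (t : ℤ) then 1 / (n : ℝ) ^ k else 0) := by
  have hM0 : (M : ℝ) ≠ 0 := Nat.cast_ne_zero.mpr hM.ne'
  set f : ℕ → ℝ := fun n => if (M : ℤ) ∣ (n : ℤ) - (t : ℤ) then 1 / (n : ℝ) ^ k else 0 with hf
  have hg : Function.Injective (fun q : ℕ => M * q + t) := by
    intro a b hab
    simp only at hab
    have : M * a = M * b := by omega
    exact Nat.eq_of_mul_eq_mul_left hM this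
  have hsupp : Function.support f ⊆ Set.range (fun q : ℕ => M * q + t) := by
    intro n hn
    rw [Function.mem_support, hf] at hn
    by_cases hd : (M : ℤ) ∣ (n : ℤ) - (t : ℤ)
    · obtain ⟨c, hc⟩ := hd
      have hn0 : n ≠ 0 := by
        rintro rfl
        apply hn
        simp [zero_pow (by omega : k ≠ 0)]
      have hc0 : 0 ≤ c := by
        rcases le_or_gt 0 c with h | h
        · exact h
        · exfalso
          have h1 : (1 : ℤ) ≤ (n : ℤ) := by exact_mod_cast Nat.one_le_iff_ne_zero.mpr hn0
          have h2 : (t : ℤ) < (M : ℤ) := by exact_mod_cast ht2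
          have h3 : c ≤ -1 := by omega
          have h4 : (M : ℤ) * c ≤ (M : ℤ) * (-1) :=
            mul_le_mul_of_nonneg_left h3 (by positivity)
          omega
      refine ⟨c.toNat, ?_⟩
      simp only
      have h5 : (M : ℤ) * c = ((M * c.toNat : ℕ) : ℤ) := by
        push_cast [Int.toNat_of_nonneg hc0]
        ring
      omega
    · exact absurd (if_neg hd) hn
  have key : ∑' q : ℕ, f (M * q + t) = ∑' n : ℕ, f n := hg.tsum_eq hsupp
  have hfq : ∀ q : ℕ, f (M * q + t) = 1 / ((M : ℝ) * q + t) ^ k := by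
    intro q
    rw [hf]
    simp only
    rw [if_pos ⟨(q : ℤ), by push_cast; ring⟩]
    push_cast
    ring_nf
  have hterm : ∀ q : ℕ, 1 / ((q : ℝ) + (t : ℝ) / M) ^ k
      = (M : ℝ) ^ k * (1 / ((M : ℝ) * q + t) ^ k) := by
    intro q
    have h1 : (q : ℝ) + (t : ℝ) / M = ((M : ℝ) * q + t) / M := by
      field_simp
    rw [h1, div_pow, one_div_div, mul_one_div]
  rw [hurwitzZetaValue]
  rw [tsum_congr hterm, tsum_mul_left, ← key, tsum_congr hfq]

open Real in
/-- For even `k ≥ 2`, `M ≥ 2` and `1 ≤ t ≤ M−1`,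
`(1/2)·Σ_{r=1}^{M} B̃_k(r/M)·cos(2πtr/M)
  = ((−1)^{k/2+1}·k!/(2·(2π)^k)) · M^{1−k} · (ζ(k,t/M) + ζ(k,1−t/M))`. -/
theorem cos_transform_periodicBernoulli (k M t : ℕ) (hk : 2 ≤ k) (hke : Even k)
    (hM : 2 ≤ M) (ht1 : 1 ≤ t) (ht2 : t ≤ M - 1) :
    (1 / 2 : ℝ) * ∑ r ∈ Finset.Icc 1 M,
        periodicBernoulli k ((r : ℝ) / M) * Real.cos (2 * Real.pi * t * r / M) =
      ((-1 : ℝ) ^ (k / 2 + 1) * (Nat.factorial k) / (2 * (2 * Real.pi) ^ k)) *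
        (M : ℝ) ^ (1 - (k : ℤ)) *
        (hurwitzZetaValue k ((t : ℝ) / M) + hurwitzZetaValue k (1 - (t : ℝ) / M)) := by
  have hM0 : (M : ℝ) ≠ 0 := by positivity
  have htM : t < M := by omega
  set C : ℝ := (-1 : ℝ) ^ (k / 2 + 1) * (2 * π) ^ k / 2 / (Nat.factorial k) with hC
  have hC0 : C ≠ 0 := by
    rw [hC]
    have h1 : ((-1 : ℝ)) ^ (k / 2 + 1) ≠ 0 := by
      rcases Nat.even_or_odd (k / 2 + 1) with h | h
      · rw [h.neg_one_pow]; norm_num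
      · rw [h.neg_one_pow]; norm_num
    have h2 : ((Nat.factorial k : ℝ)) ≠ 0 := by positivity
    have h3 : ((2 : ℝ) * π) ^ k ≠ 0 := by positivity
    field_simp
    exact div_ne_zero (mul_ne_zero h1 h3) (mul_ne_zero two_ne_zero h2)
  -- the Fourier expansion of the Bernoulli polynomial
  have hHas : ∀ x ∈ Set.Icc (0:ℝ) 1,
      HasSum (fun n : ℕ => 1 / (n : ℝ) ^ k * Real.cos (2 * π * n * x))
        (C * (Polynomial.map (algebraMap ℚ ℝ) (Polynomial.bernoulli k)).eval x) := by
    intro x hx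
    have hk2 : 2 * (k / 2) = k := by have := Nat.even_iff.mp hke; omega
    have h := hasSum_one_div_nat_pow_mul_cos (k := k / 2) (by omega) hx
    rw [hk2] at h
    exact h
  have hmem : ∀ r ∈ Finset.Icc 1 M, (r : ℝ) / M ∈ Set.Icc (0:ℝ) 1 := by
    intro r hr
    rw [Finset.mem_Icc] at hr
    constructor
    · positivity
    · rw [div_le_one (by positivity)]
      exact_mod_cast hr.2
  have hPB : ∀ r ∈ Finset.Icc 1 M, periodicBernoulli k ((r : ℝ) / M) =
      (Polynomial.map (algebraMap ℚ ℝ) (Polynomial.bernoulli k)).eval ((r : ℝ) / M) := by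
    intro r hr
    rw [Finset.mem_Icc] at hr
    rw [periodicBernoulli, if_neg (by rintro ⟨h1, -⟩; omega)]
    rw [Polynomial.aeval_def, ← Polynomial.eval_map]
    rcases eq_or_lt_of_le hr.2 with h | h
    · subst h
      rw [div_self hM0, show Int.fract (1 : ℝ) = 0 by simp [Int.fract_one]]
      exact (bernoulliFun_endpoints_eq_of_ne_one (by omega)).symm
    · congr 1
      rw [Int.fract_eq_self]
      exact ⟨by positivity, by rw [div_lt_one (by positivity)]; exact_mod_cast h⟩
  set g : ℕ → ℕ → ℝ := fun r n =>
    1 / (n : ℝ) ^ k * Real.cos (2 * π * n * ((r : ℝ) / M)) * Real.cos (2 * π * t * r / M)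
    with hg
  have hgsummable : ∀ r ∈ Finset.Icc 1 M, Summable (g r) := fun r hr =>
    ((hHas _ (hmem r hr)).summable.mul_right _)
  -- step A : express summand via tsum
  have hstepA : ∀ r ∈ Finset.Icc 1 M,
      periodicBernoulli k ((r : ℝ) / M) * Real.cos (2 * π * t * r / M)
        = (1 / C) * ∑' n : ℕ, g r n := by
    intro r hr
    rw [hPB r hr]
    have h1 := (hHas _ (hmem r hr)).tsum_eq
    have h2 : ∑' n : ℕ, g r n =
        (∑' n : ℕ, 1 / (n : ℝ) ^ k * Real.cos (2 * π * n * ((r : ℝ) / M))) *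
          Real.cos (2 * π * t * r / M) := tsum_mul_right
    rw [h2, h1]
    field_simp
  rw [Finset.sum_congr rfl hstepA, ← Finset.mul_sum, ← Summable.tsum_finsetSum hgsummable]
  -- step B : evaluate the inner finite sum for each n
  set aF : ℕ → ℝ := fun n => if (M : ℤ) ∣ (n : ℤ) - (t : ℤ) then 1 / (n : ℝ) ^ k else 0 with haF
  set bF : ℕ → ℝ := fun n => if (M : ℤ) ∣ (n : ℤ) + (t : ℤ) then 1 / (n : ℝ) ^ k else 0 with hbF
  have hstepB : ∀ n : ℕ, ∑ r ∈ Finset.Icc 1 M, g r n = ((M : ℝ) / 2) * (aF n + bF n) := by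
    intro n
    have hprod : ∀ r ∈ Finset.Icc 1 M, g r n =
        1 / (n : ℝ) ^ k * ((Real.cos (2 * π * (((n : ℤ) + t : ℤ) : ℝ) * r / M)
          + Real.cos (2 * π * (((n : ℤ) - t : ℤ) : ℝ) * r / M)) / 2) := by
      intro r hr
      rw [hg]
      simp only
      have hA : 2 * π * (((n : ℤ) + t : ℤ) : ℝ) * r / M
          = 2 * π * n * ((r : ℝ) / M) + 2 * π * t * r / M := by push_cast; ring
      have hB : 2 * π * (((n : ℤ) - t : ℤ) : ℝ) * r / M
          = 2 * π * n * ((r : ℝ) / M) - 2 * π * t * r / M := by push_cast; ring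
      rw [hA, hB, Real.cos_add, Real.cos_sub]
      ring
    rw [Finset.sum_congr rfl hprod, ← Finset.mul_sum, ← Finset.sum_div,
      Finset.sum_add_distrib, sum_cos_char (by omega) ((n : ℤ) + t),
      sum_cos_char (by omega) ((n : ℤ) - t)]
    rw [haF, hbF]
    simp only
    split_ifs <;> ring
  rw [tsum_congr hstepB]
  -- step C : split the tsum
  have hsummable_one : Summable (fun n : ℕ => 1 / (n : ℝ) ^ k) :=
    Real.summable_one_div_nat_pow.mpr (by omega)
  have hnonneg : ∀ n : ℕ, (0 : ℝ) ≤ 1 / (n : ℝ) ^ k := fun n => by positivity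
  have haS : Summable aF := by
    apply Summable.of_nonneg_of_le _ _ hsummable_one
    · intro n; rw [haF]; dsimp only; split_ifs
      · exact hnonneg n
      · exact le_rfl
    · intro n; rw [haF]; dsimp only; split_ifs with h
      · exact le_rfl
      · exact hnonneg n
  have hbS : Summable bF := by
    apply Summable.of_nonneg_of_le _ _ hsummable_one
    · intro n; rw [hbF]; dsimp only; split_ifs
      · exact hnonneg n
      · exact le_rfl
    · intro n; rw [hbF]; dsimp only; split_ifs with h
      · exact le_rfl
      · exact hnonneg n
  rw [tsum_mul_left, Summable.tsum_add haS hbS]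
  -- step D : identify the two tsums with Hurwitz zeta values
  have hζ1 : hurwitzZetaValue k ((t : ℝ) / M) = (M : ℝ) ^ k * ∑' n, aF n :=
    tsum_indicator_eq hk (by omega) ht1 htM
  have hbF' : bF = fun n : ℕ =>
      if (M : ℤ) ∣ (n : ℤ) - ((M - t : ℕ) : ℤ) then 1 / (n : ℝ) ^ k else 0 := by
    funext n
    rw [hbF]
    dsimp only
    have hMt : ((M - t : ℕ) : ℤ) = (M : ℤ) - t := by
      push_cast [Nat.cast_sub htM.le]
      ring
    apply if_congr _ rfl rfl
    rw [hMt]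
    constructor
    · rintro ⟨c, hc⟩
      exact ⟨c - 1, by rw [mul_sub, mul_one]; omega⟩
    · rintro ⟨c, hc⟩
      exact ⟨c + 1, by rw [mul_add, mul_one]; omega⟩
  have hζ2 : hurwitzZetaValue k (1 - (t : ℝ) / M) = (M : ℝ) ^ k * ∑' n, bF n := by
    have hone : (1 : ℝ) - (t : ℝ) / M = ((M - t : ℕ) : ℝ) / M := by
      rw [Nat.cast_sub htM.le]
      field_simp
    rw [hone, hbF']
    exact tsum_indicator_eq hk (by omega) (by omega) (by omega)
  rw [hζ1, hζ2]
  -- step E : final algebra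
  have hzpow : (M : ℝ) ^ (1 - (k : ℤ)) = (M : ℝ) / (M : ℝ) ^ k := by
    rw [zpow_sub₀ hM0, zpow_one, zpow_natCast]
  rw [hzpow, hC]
  have hA2 : ((-1 : ℝ)) ^ (k / 2 + 1) * ((-1 : ℝ)) ^ (k / 2 + 1) = 1 := by
    rw [← pow_add]
    exact Even.neg_one_pow ⟨k / 2 + 1, rfl⟩
  have h2 : ((Nat.factorial k : ℝ)) ≠ 0 := by positivity
  have h3 : ((2 : ℝ) * π) ^ k ≠ 0 := by positivity
  have h4 : (M : ℝ) ^ k ≠ 0 := by positivity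
  have h1 : ((-1 : ℝ)) ^ (k / 2 + 1) ≠ 0 := by
    intro h
    rw [h, mul_zero] at hA2
    norm_num at hA2
  have h5 : ((-1 : ℝ)) ^ (k / 2 * 2) = 1 := by
    rw [mul_comm, pow_mul, neg_one_sq, one_pow]
  field_simp
  ring_nf
  rw [h5]
  ring
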